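/- Let k be a field of characteristic 2, let n ≥ 1, let J ⊆ {1, …, n} and let e = Σ_{j∈J} E_{j,j+1} ∈ sl_{n+1}(k) be a sum of superdiagonal matrix units. If there exists h ∈ sl_{n+1}(k) with ⁅h,e⁆ = e, then there exists a diagonal matrix h₀ ∈ sl_{n+1}(k) with ⁅h₀,e⁆ = e. -/

import Mathlib

lemma diag_mul_sbm {α : Type*} [NonUnitalNonAssocSemiring α] {m : Type*} [Fintype m]
    [DecidableEq m] (d : m → α) (a b : m) (c : α) :
    Matrix.diagonal d * Matrix.single a b c
      = Matrix.single a b (d a * c) := by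
  ext i j
  rw [Matrix.diagonal_mul]
  simp only [Matrix.single, Matrix.of_apply]
  by_cases hi : a = i <;> simp [hi]

lemma sbm_mul_diag {α : Type*} [NonUnitalNonAssocSemiring α] {m : Type*} [Fintype m]
    [DecidableEq m] (d : m → α) (a b : m) (c : α) :
    Matrix.single a b c * Matrix.diagonal d
      = Matrix.single a b (c * d b) := by
  ext i j
  rw [Matrix.mul_diagonal]
  simp only [Matrix.single, Matrix.of_apply]
  by_cases hj : b = j <;> simp [hj]

lemma sbm_sub {α : Type*} [Ring α] {m : Type*} [DecidableEq m] (a b : m) (x y : α) :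
    Matrix.single a b x - Matrix.single a b y
      = Matrix.single a b (x - y) := by
  ext i j
  simp only [Matrix.sub_apply, Matrix.single, Matrix.of_apply]
  by_cases hi : a = i <;> by_cases hj : b = j <;> simp [hi, hj]

open LieAlgebra.SpecialLinear in
/-- Let `e = Σ_{j∈J} E_{j,j+1} ∈ sl_{n+1}(k)` be a sum of superdiagonal
matrix units, `k` of characteristic 2. If some `h ∈ sl_{n+1}(k)` satisfies `⁅h,e⁆ = e`,
then some diagonal `h₀ ∈ sl_{n+1}(k)` satisfies `⁅h₀,e⁆ = e`. -/
theorem stmt_18 (k : Type*) [Field k] [CharP k 2]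
    (n : ℕ) (hn : 1 ≤ n) (J : Finset (Fin n))
    (e : sl (Fin (n + 1)) k)
    (he : e.val = ∑ j ∈ J, Matrix.single j.castSucc j.succ (1 : k))
    (h : sl (Fin (n + 1)) k) (hh : ⁅h, e⁆ = e) :
    ∃ h₀ : sl (Fin (n + 1)) k, (h₀.val).IsDiag ∧ ⁅h₀, e⁆ = e := by
  set M : Matrix (Fin (n+1)) (Fin (n+1)) k := h.val with hM
  set d : Fin (n+1) → k := fun i => M i i with hd
  -- h₀ candidate
  have htr : (Matrix.diagonal d).trace = 0 := by
    rw [Matrix.trace_diagonal]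
    have := h.property
    have h2 : M.trace = 0 := this
    simpa [Matrix.trace, Matrix.diag] using h2
  refine ⟨⟨Matrix.diagonal d, htr⟩, Matrix.isDiag_diagonal d, ?_⟩
  -- matrix-level consequence of hh
  have hh' : M * e.val - e.val * M = e.val := congrArg Subtype.val hh
  -- key: for m ∈ J, d m.castSucc - d m.succ = 1
  have hkey : ∀ m ∈ J, d m.castSucc - d m.succ = 1 := by
    intro m hm
    have := congrFun (congrFun hh' m.castSucc) m.succ
    rw [he] at this
    simp only [Matrix.sub_apply, Matrix.mul_sum, Matrix.sum_mul,
      Matrix.sum_apply] at this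
    rw [Finset.sum_eq_single m (fun b _ hb => by
        rw [Matrix.mul_single_apply_of_ne]
        exact fun hc => hb (Fin.succ_injective n hc.symm)) (fun hc => absurd hm hc),
      Finset.sum_eq_single m (fun b _ hb => by
        rw [Matrix.single_mul_apply_of_ne]
        exact fun hc => hb (Fin.castSucc_injective n hc.symm)) (fun hc => absurd hm hc),
      Finset.sum_eq_single m (fun b _ hb => by
        simp only [Matrix.single, Matrix.of_apply, ite_eq_right_iff, and_imp]
        exact fun hc _ => absurd (Fin.castSucc_injective n hc) hb)
        (fun hc => absurd hm hc)] at this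
    simpa [mul_comm] using this
  apply Subtype.ext
  show Matrix.diagonal d * e.val - e.val * Matrix.diagonal d = e.val
  rw [he, Matrix.mul_sum, Matrix.sum_mul, ← Finset.sum_sub_distrib]
  refine Finset.sum_congr rfl fun m hm => ?_
  rw [diag_mul_sbm, sbm_mul_diag, sbm_sub]
  rw [mul_one, one_mul, hkey m hm]
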